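/- Let β > 1. There exists a constant c > 0, depending only on β, such that c·β^n ≤ |F_β(n)| ≤ β^n for all n ≥ 1; moreover 1 ≤ |L_β(n)|/|F_β(n)| ≤ c^{−1}·β/(β−1) for all n ≥ 1. -/

import Mathlib

/-!
STATEMENT 18: For `β > 1` there is a constant `c > 0`, depending only on `β` (and its
expansion `ω`), with `c β^n ≤ |F_β(n)| ≤ β^n` and `1 ≤ |L_β(n)|/|F_β(n)| ≤ c⁻¹ β/(β−1)`
for all `n ≥ 1`.
-/

open MeasureTheory Filter

set_option linter.unusedSectionVars false
set_option maxHeartbeats 1000000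

namespace PaperStmt

def IsGreedyExpansionOfOne (β : ℝ) (ω : ℕ → ℕ) : Prop :=
  (∑' n : ℕ, (ω n : ℝ) / β ^ (n + 1)) = 1 ∧
  (∀ n : ℕ, 1 < (∑ k ∈ Finset.range (n + 1), (ω k : ℝ) / β ^ (k + 1)) + 1 / β ^ (n + 1)) ∧
  (∀ N : ℕ, ∃ n : ℕ, N ≤ n ∧ ω n ≠ 0)

def lexLeOmega (ω : ℕ → ℕ) (x : ℤ → ℕ) (n : ℤ) (m : ℕ) : Prop :=
  (∀ i : ℕ, i ≤ m → x (n + (i : ℤ)) = ω i) ∨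
  ∃ j : ℕ, j ≤ m ∧ (∀ i : ℕ, i < j → x (n + (i : ℤ)) = ω i) ∧ x (n + (j : ℤ)) < ω j

def betaShift (ω : ℕ → ℕ) : Set (ℤ → ℕ) :=
  {x | ∀ (n : ℤ) (m : ℕ), lexLeOmega ω x n m}

def wordCyl {A : Type*} {k : ℕ} (a : Fin k → A) : Set (ℤ → A) :=
  {x | ∀ i : Fin k, x ((i : ℕ) : ℤ) = a i}

def langWords {A : Type*} (Y : Set (ℤ → A)) (k : ℕ) : Set (Fin k → A) :=
  {a | ∃ x ∈ Y, x ∈ wordCyl a}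

def followWords (Y : Set (ℤ → ℕ)) (k : ℕ) : Set (Fin k → ℕ) :=
  {a | a ∈ langWords Y k ∧
    ∀ (m : ℕ) (z : Fin m → ℕ), z ∈ langWords Y m → Fin.append a z ∈ langWords Y (k + m)}

namespace Aux

def Drop (ω : ℕ → ℕ) (n : ℕ) (b : ℕ → ℕ) (p : ℕ) : Prop :=
  ∃ j, p + j < n ∧ (∀ i, i < j → b (p + i) = ω i) ∧ b (p + j) < ω j

def P (ω : ℕ → ℕ) (n : ℕ) (b : ℕ → ℕ) (p : ℕ) : Prop :=
  (∀ i, p + i < n → b (p + i) = ω i) ∨ Drop ω n b p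

def AdmW (ω : ℕ → ℕ) (n : ℕ) (b : ℕ → ℕ) : Prop := ∀ p, p < n → P ω n b p
def FullW (ω : ℕ → ℕ) (n : ℕ) (b : ℕ → ℕ) : Prop := ∀ p, p < n → Drop ω n b p

def extW (n : ℕ) (a : Fin n → ℕ) : ℕ → ℕ := fun i => if h : i < n then a ⟨i, h⟩ else 0

section Analytic

variable {β : ℝ} (hβ : 1 < β) {ω : ℕ → ℕ}
  (h1 : (∑' n : ℕ, (ω n : ℝ) / β ^ (n + 1)) = 1)
  (h2 : ∀ n : ℕ, 1 < (∑ k ∈ Finset.range (n + 1), (ω k : ℝ) / β ^ (k + 1)) + 1 / β ^ (n + 1))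

noncomputable def v (β : ℝ) (ω : ℕ → ℕ) (m : ℕ) : ℝ :=
  ∑ k ∈ Finset.range m, (ω k : ℝ) / β ^ (k + 1)

noncomputable def T (β : ℝ) (ω : ℕ → ℕ) (q : ℕ) : ℝ :=
  ∑' i : ℕ, (ω (q + i) : ℝ) / β ^ (i + 1)

include hβ h1

lemma summable_main : Summable (fun n : ℕ => (ω n : ℝ) / β ^ (n + 1)) := by
  by_contra h
  rw [tsum_eq_zero_of_not_summable h] at h1
  norm_num at h1

lemma summable_tail (q : ℕ) : Summable (fun i : ℕ => (ω (q + i) : ℝ) / β ^ (i + 1)) := by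
  have hb : (0:ℝ) < β := lt_trans one_pos hβ
  have hs := summable_main hβ h1
  have h' : Summable (fun i : ℕ => (ω (i + q) : ℝ) / β ^ (i + q + 1)) :=
    (summable_nat_add_iff (f := fun n : ℕ => (ω n : ℝ) / β ^ (n + 1)) q).2 hs
  have h'' := h'.mul_left ((β : ℝ) ^ q)
  refine h''.congr fun i => ?_
  show β ^ q * ((ω (i + q) : ℝ) / β ^ (i + q + 1)) = (ω (q + i) : ℝ) / β ^ (i + 1)
  rw [add_comm q i, show (i + q + 1) = (i + 1) + q by ring, pow_add,
    mul_comm (β ^ (i+1)) (β ^ q), ← div_div, mul_comm, div_right_comm,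
    div_mul_cancel₀ _ (ne_of_gt (pow_pos hb q))]

lemma v_le_one (m : ℕ) : v β ω m ≤ 1 := by
  rw [← h1]
  exact Summable.sum_le_tsum _ (fun i _ => by positivity) (summable_main hβ h1)

lemma one_eq_v_add_T (q : ℕ) : 1 = v β ω q + T β ω q / β ^ q := by
  have hb : (0:ℝ) < β := lt_trans one_pos hβ
  have hs := summable_main hβ h1
  have hsplit := (Summable.sum_add_tsum_nat_add (f := fun n : ℕ => (ω n : ℝ) / β ^ (n + 1)) q hs).symm
  rw [h1] at hsplit
  rw [hsplit]
  unfold v T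
  congr 1
  rw [eq_div_iff (by positivity), ← tsum_mul_right]
  apply tsum_congr
  intro i
  have : (i + q + 1) = (i + 1) + q := by ring
  rw [this, pow_add, add_comm q i, ← div_div,
    div_mul_cancel₀ _ (ne_of_gt (pow_pos hb q))]

include h2

lemma T_lt_one (q : ℕ) (hq : 1 ≤ q) : T β ω q < 1 := by
  have hb : (0:ℝ) < β := lt_trans one_pos hβ
  obtain ⟨q', rfl⟩ := Nat.exists_eq_add_of_le hq
  have hg := h2 q'
  have he := one_eq_v_add_T hβ h1 (1 + q')
  have hv : v β ω (1 + q') = ∑ k ∈ Finset.range (q' + 1), (ω k : ℝ) / β ^ (k + 1) := by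
    unfold v; rw [add_comm]
  rw [hv] at he
  have hlt : T β ω (1 + q') / β ^ (1 + q') < 1 / β ^ (q' + 1) := by
    rw [add_comm 1 q'] at he ⊢
    linarith
  rw [add_comm 1 q'] at hlt ⊢
  have hp : (0:ℝ) < β ^ (q' + 1) := by positivity
  rw [div_lt_div_iff₀ hp hp] at hlt
  nlinarith

omit h2 in
lemma partial_le_T (q j : ℕ) :
    ∑ i ∈ Finset.range j, (ω (q + i) : ℝ) / β ^ (i + 1) ≤ T β ω q :=
  Summable.sum_le_tsum _ (fun i _ => by positivity) (summable_tail hβ h1 q)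

lemma omega0_pos : 1 ≤ ω 0 := by
  have hb : (0:ℝ) < β := lt_trans one_pos hβ
  have hg := h2 0
  simp [Finset.sum_range_one] at hg
  by_contra h
  push_neg at h
  have h0 : ω 0 = 0 := by omega
  rw [h0] at hg
  simp at hg
  have : β⁻¹ ≤ 1 := inv_le_one_of_one_le₀ (le_of_lt hβ)
  linarith

/-- key: every shift of ω drops strictly below ω -/
lemma shift_drop (q : ℕ) (hq : 1 ≤ q) :
    ∃ j, (∀ i, i < j → ω (q + i) = ω i) ∧ ω (q + j) < ω j := by
  have hb : (0:ℝ) < β := lt_trans one_pos hβ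
  have hT : T β ω q < 1 := T_lt_one hβ h1 h2 q hq
  by_contra h
  push_neg at h
  have hall : ∀ i, ω (q + i) = ω i := by
    intro i
    induction i using Nat.strong_induction_on with
    | _ i ih =>
      have hge := h i ih
      rcases Nat.lt_or_ge (ω i) (ω (q + i)) with hgt | hle
      · exfalso
        have hpart := partial_le_T hβ h1 q (i + 1)
        have hg := h2 i
        have heq : (∑ k ∈ Finset.range (i+1), (ω k : ℝ) / β ^ (k + 1)) + 1 / β ^ (i + 1)
            ≤ ∑ k ∈ Finset.range (i+1), (ω (q + k) : ℝ) / β ^ (k + 1) := by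
          rw [Finset.sum_range_succ, Finset.sum_range_succ]
          have hsum : ∑ k ∈ Finset.range i, (ω (q + k) : ℝ) / β ^ (k + 1)
              = ∑ k ∈ Finset.range i, (ω k : ℝ) / β ^ (k + 1) :=
            Finset.sum_congr rfl fun k hk => by rw [ih k (Finset.mem_range.1 hk)]
          rw [hsum]
          have hc : (ω i : ℝ) + 1 ≤ (ω (q + i) : ℝ) := by exact_mod_cast Nat.succ_le_of_lt hgt
          have hp : (0:ℝ) < β ^ (i + 1) := by positivity
          have := div_le_div_of_nonneg_right (c := β ^ (i+1)) hc hp.le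
          rw [add_div] at this
          linarith
        linarith
      · omega
  have hTeq : T β ω q = 1 := by
    rw [← h1]
    exact tsum_congr fun i => by rw [hall i]
  linarith

end Analytic

section Words

variable {ω : ℕ → ℕ}

lemma fullW_admW {n b} (h : FullW ω n b) : AdmW ω n b := fun p hp => Or.inr (h p hp)

lemma admW_congr {n} {b b' : ℕ → ℕ} (h : ∀ i, i < n → b i = b' i) (hb : AdmW ω n b) :
    AdmW ω n b' := by
  intro p hp
  rcases hb p hp with he | ⟨j, hj, hje, hjl⟩
  · exact Or.inl fun i hi => by rw [← h _ hi]; exact he i hi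
  · exact Or.inr ⟨j, hj, fun i hi => by
      rw [← h _ (lt_of_le_of_lt (by omega) hj)]; exact hje i hi,
      by rw [← h _ hj]; exact hjl⟩

lemma fullW_congr {n} {b b' : ℕ → ℕ} (h : ∀ i, i < n → b i = b' i) (hb : FullW ω n b) :
    FullW ω n b' := by
  intro p hp
  rcases hb p hp with ⟨j, hj, hje, hjl⟩
  exact ⟨j, hj, fun i hi => by
      rw [← h _ (lt_of_le_of_lt (by omega) hj)]; exact hje i hi,
    by rw [← h _ hj]; exact hjl⟩

lemma admW_mono {n m b} (hmn : m ≤ n) (hb : AdmW ω n b) : AdmW ω m b := by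
  intro p hp
  rcases hb p (lt_of_lt_of_le hp hmn) with he | ⟨j, hj, hje, hjl⟩
  · exact Or.inl fun i hi => he i (lt_of_lt_of_le hi hmn)
  · by_cases hjm : p + j < m
    · exact Or.inr ⟨j, hjm, hje, hjl⟩
    · exact Or.inl fun i hi => hje i (by omega)

lemma fullW_digit_le {n b} (hb : AdmW ω n b) {p} (hp : p < n) : b p ≤ ω 0 := by
  rcases hb p hp with he | ⟨j, hj, hje, hjl⟩
  · have := he 0 (by omega); simp at this; omega
  · rcases Nat.eq_zero_or_pos j with rfl | hj0
    · have := hjl; simp at this; omega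
    · have := hje 0 hj0; simp at this; omega

/-- suffixes of a full word are full -/
lemma fullW_suffix {n b} (hb : FullW ω n b) (s : ℕ) :
    FullW ω (n - s) (fun i => b (s + i)) := by
  intro p hp
  obtain ⟨j, hj, hje, hjl⟩ := hb (s + p) (by omega)
  exact ⟨j, by omega, fun i hi => by
    have := hje i hi; rw [← this]; ring_nf, by
    have := hjl; simpa [Nat.add_assoc] using this⟩

/-- the key extension disjunction: a word admissible in `[0,n)`, zero beyond `n`,
satisfies the lex condition at `p` for every window length -/
lemma P_ext (hω0 : 1 ≤ ω 0) {n} {b : ℕ → ℕ} (hb : AdmW ω n b) (hz : ∀ i, n ≤ i → b i = 0)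
    (p m : ℕ) (hp : p < n) :
    (∀ i, i ≤ m → b (p + i) = ω i) ∨
      ∃ j, j ≤ m ∧ (∀ i, i < j → b (p + i) = ω i) ∧ b (p + j) < ω j := by
  rcases hb p hp with he | ⟨j, hj, hje, hjl⟩
  · by_cases hall : ∀ i, i ≤ m → n ≤ p + i → ω i = 0
    · left
      intro i hi
      by_cases h' : p + i < n
      · exact he i h'
      · rw [hz _ (by omega), hall i hi (by omega)]
    · right
      push_neg at hall
      obtain ⟨i0, hi0m, hi0n, hi0⟩ := hall
      have hex : ∃ i, n ≤ p + i ∧ ω i ≠ 0 := ⟨i0, hi0n, hi0⟩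
      classical
      set j := Nat.find hex with hjdef
      have hspec := Nat.find_spec hex
      have hjle : j ≤ i0 := Nat.find_min' hex ⟨hi0n, hi0⟩
      refine ⟨j, le_trans hjle hi0m, fun i hi => ?_, ?_⟩
      · by_cases h' : p + i < n
        · exact he i h'
        · have := Nat.find_min hex hi
          push_neg at this
          rw [hz _ (by omega), this (by omega)]
      · rw [hz _ hspec.1]
        exact Nat.pos_of_ne_zero hspec.2
  · by_cases hjm : j ≤ m
    · exact Or.inr ⟨j, hjm, hje, hjl⟩
    · exact Or.inl fun i hi => hje i (by omega)

end Words
section Char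

variable {ω : ℕ → ℕ}

/-- points built from admissible words padded by zeros lie in the shift -/
lemma zeroExt_mem (hω0 : 1 ≤ ω 0) {n} {b : ℕ → ℕ} (hb : AdmW ω n b)
    (hz : ∀ i, n ≤ i → b i = 0) :
    (fun i : ℤ => if 0 ≤ i then b i.toNat else 0) ∈ betaShift ω := by
  intro s m
  set x : ℤ → ℕ := fun i : ℤ => if 0 ≤ i then b i.toNat else 0 with hx
  by_cases hs0 : 0 ≤ s
  · by_cases hsn : s.toNat < n
    · -- inside the word
      have hval : ∀ i : ℕ, x (s + (i : ℤ)) = b (s.toNat + i) := by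
        intro i
        have h0 : (0:ℤ) ≤ s + i := by omega
        simp only [hx, if_pos h0]
        congr 1
        omega
      rcases P_ext hω0 hb hz s.toNat m hsn with he | ⟨j, hj, hje, hjl⟩
      · exact Or.inl fun i hi => by rw [hval]; exact he i hi
      · exact Or.inr ⟨j, hj, fun i hi => by rw [hval]; exact hje i hi, by rw [hval]; exact hjl⟩
    · -- start beyond the word: x s = 0
      refine Or.inr ⟨0, Nat.zero_le m, fun i hi => by omega, ?_⟩
      have : x (s + (0:ℕ)) = 0 := by
        simp only [hx, Nat.cast_zero, add_zero, if_pos hs0]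
        exact hz _ (by omega)
      rw [this]; omega
  · refine Or.inr ⟨0, Nat.zero_le m, fun i hi => by omega, ?_⟩
    have : x (s + (0:ℕ)) = 0 := by
      simp only [hx, Nat.cast_zero, add_zero, if_neg hs0]
    rw [this]; omega

lemma mem_lang_of_adm (hω0 : 1 ≤ ω 0) {n} {a : Fin n → ℕ} (h : AdmW ω n (extW n a)) :
    a ∈ langWords (betaShift ω) n := by
  have hz : ∀ i, n ≤ i → extW n a i = 0 := fun i hi => dif_neg (by omega)
  refine ⟨_, zeroExt_mem hω0 h hz, fun i => ?_⟩
  have h0 : (0:ℤ) ≤ ((i : ℕ) : ℤ) := Int.ofNat_nonneg _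
  simp only [if_pos h0]
  have : ((i : ℕ) : ℤ).toNat = (i : ℕ) := Int.toNat_natCast _
  rw [this]
  simp [extW, i.isLt]

lemma adm_of_mem_lang {n} {a : Fin n → ℕ} (h : a ∈ langWords (betaShift ω) n) :
    AdmW ω n (extW n a) := by
  obtain ⟨x, hxY, hxc⟩ := h
  intro p hp
  have hval : ∀ i : ℕ, p + i < n → x ((p : ℤ) + (i : ℤ)) = extW n a (p + i) := by
    intro i hi
    have := hxc ⟨p + i, hi⟩
    rw [show ((p:ℤ) + (i:ℤ)) = ((p + i : ℕ) : ℤ) by push_cast; ring, this]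
    simp [extW, hi]
  rcases hxY (p : ℤ) (n - 1 - p) with he | ⟨j, hj, hje, hjl⟩
  · exact Or.inl fun i hi => by rw [← hval i hi]; exact he i (by omega)
  · refine Or.inr ⟨j, by omega, fun i hi => by rw [← hval i (by omega)]; exact hje i hi,
      by rw [← hval j (by omega)]; exact hjl⟩

lemma lang_eq_adm (hω0 : 1 ≤ ω 0) (n : ℕ) :
    langWords (betaShift ω) n = {a : Fin n → ℕ | AdmW ω n (extW n a)} :=
  Set.ext fun a => ⟨adm_of_mem_lang, mem_lang_of_adm hω0⟩

end Char
section Follow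

variable {ω : ℕ → ℕ}

/-- gluing a full word in front of any shift point stays in the shift -/
lemma glue_mem (hω0 : 1 ≤ ω 0) {n} {b : ℕ → ℕ} (hb : FullW ω n b)
    {xz : ℤ → ℕ} (hxz : xz ∈ betaShift ω) :
    (fun i : ℤ => if i < (n : ℤ) then (if 0 ≤ i then b i.toNat else 0) else xz (i - n))
      ∈ betaShift ω := by
  intro s m
  set y : ℤ → ℕ :=
    fun i : ℤ => if i < (n : ℤ) then (if 0 ≤ i then b i.toNat else 0) else xz (i - n) with hy
  by_cases hs0 : 0 ≤ s
  · by_cases hsn : s < (n : ℤ)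
    · -- inside the word; use the drop of the full word
      have hsn' : s.toNat < n := by omega
      obtain ⟨j, hj, hje, hjl⟩ := hb s.toNat hsn'
      have hval : ∀ i : ℕ, s.toNat + i < n → y (s + (i : ℤ)) = b (s.toNat + i) := by
        intro i hi
        have h1 : s + (i : ℤ) < (n : ℤ) := by omega
        have h2 : (0:ℤ) ≤ s + i := by omega
        simp only [hy, if_pos h1, if_pos h2]
        congr 1
        omega
      by_cases hjm : j ≤ m
      · exact Or.inr ⟨j, hjm, fun i hi => by rw [hval i (by omega)]; exact hje i hi,
          by rw [hval j hj]; exact hjl⟩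
      · exact Or.inl fun i hi => by rw [hval i (by omega)]; exact hje i (by omega)
    · -- start beyond the word: defer to xz
      have hval : ∀ i : ℕ, y (s + (i : ℤ)) = xz ((s - n) + (i : ℤ)) := by
        intro i
        have h1 : ¬ (s + (i : ℤ) < (n : ℤ)) := by omega
        simp only [hy, if_neg h1]
        congr 1
        omega
      rcases hxz (s - n) m with he | ⟨j, hj, hje, hjl⟩
      · exact Or.inl fun i hi => by rw [hval]; exact he i hi
      · exact Or.inr ⟨j, hj, fun i hi => by rw [hval]; exact hje i hi, by rw [hval]; exact hjl⟩
  · -- negative start: y s = 0 < ω 0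
    refine Or.inr ⟨0, Nat.zero_le m, fun i hi => by omega, ?_⟩
    have h1 : s + ((0:ℕ) : ℤ) < (n : ℤ) := by omega
    have : y (s + ((0:ℕ) : ℤ)) = 0 := by
      simp only [hy, if_pos h1, if_neg (show ¬ (0:ℤ) ≤ s + ((0:ℕ):ℤ) by omega)]
    rw [this]; omega

/-- ω-prefixes are admissible words (given the shift-drop property) -/
lemma admW_omega_prefix
    (hsd : ∀ q, 1 ≤ q → ∃ j, (∀ i, i < j → ω (q + i) = ω i) ∧ ω (q + j) < ω j)
    (m : ℕ) : AdmW ω m ω := by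
  intro p hp
  rcases Nat.eq_zero_or_pos p with rfl | hp0
  · exact Or.inl fun i _ => by rw [Nat.zero_add]
  · obtain ⟨j, hje, hjl⟩ := hsd p hp0
    by_cases hjm : p + j < m
    · exact Or.inr ⟨j, hjm, fun i hi => hje i hi, hjl⟩
    · exact Or.inl fun i hi => hje i (by omega)

lemma follow_eq_full (hω0 : 1 ≤ ω 0)
    (hsd : ∀ q, 1 ≤ q → ∃ j, (∀ i, i < j → ω (q + i) = ω i) ∧ ω (q + j) < ω j)
    (n : ℕ) :
    followWords (betaShift ω) n = {a : Fin n → ℕ | FullW ω n (extW n a)} := by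
  ext a
  constructor
  · rintro ⟨hlang, happ⟩
    have hadm : AdmW ω n (extW n a) := adm_of_mem_lang hlang
    intro p hp
    by_contra hnd
    -- then the suffix starting at p matches ω
    have he : ∀ i, p + i < n → extW n a (p + i) = ω i := by
      rcases hadm p hp with h | h
      · exact h
      · exact absurd h hnd
    set q := n - p with hq
    have hq1 : 1 ≤ q := by omega
    obtain ⟨j, hje, hjl⟩ := hsd q hq1
    -- use z = ω-prefix of length j+1
    set m := j + 1 with hm
    set z : Fin m → ℕ := fun i => ω i with hz
    have hzl : z ∈ langWords (betaShift ω) m := by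
      apply mem_lang_of_adm hω0
      apply admW_congr (b := ω) (fun i hi => by simp [extW, hz, hi])
      exact admW_omega_prefix hsd m
    obtain ⟨x', hx'Y, hx'c⟩ := happ m z hzl
    -- values of x' along the appended word
    have hval : ∀ i : ℕ, i ≤ q + j → x' ((p : ℤ) + (i : ℤ)) = (if i < q then ω i else ω (i - q)) := by
      intro i hi
      have hin : p + i < n + m := by omega
      have h1 := hx'c ⟨p + i, hin⟩
      rw [show ((p:ℤ) + (i:ℤ)) = (((p + i : ℕ)) : ℤ) by push_cast; ring, h1]
      by_cases hiq : i < q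
      · have hlt : p + i < n := by omega
        have : (⟨p + i, hin⟩ : Fin (n + m)) = Fin.castAdd m ⟨p + i, hlt⟩ := by
          apply Fin.ext; simp
        rw [this, Fin.append_left]
        rw [if_pos hiq]
        have := he i hlt
        simpa [extW, hlt] using this
      · have hge : i - q < m := by omega
        have : (⟨p + i, hin⟩ : Fin (n + m)) = Fin.natAdd n ⟨i - q, hge⟩ := by
          apply Fin.ext; simp; omega
        rw [this, Fin.append_right, if_neg hiq]
    -- now derive the contradiction from the lex condition at p
    rcases hx'Y (p : ℤ) (q + j) with hE | ⟨j', hj', hj'e, hj'l⟩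
    · have := hE (q + j) le_rfl
      rw [hval (q + j) le_rfl] at this
      rw [if_neg (by omega)] at this
      simp only [Nat.add_sub_cancel_left] at this
      omega
    · rw [hval j' hj'] at hj'l
      by_cases h1 : j' < q
      · rw [if_pos h1] at hj'l; omega
      · rw [if_neg h1] at hj'l
        by_cases h2 : j' < q + j
        · have := hje (j' - q) (by omega)
          rw [show q + (j' - q) = j' by omega] at this
          omega
        · have h3 : j' = q + j := by omega
          subst h3
          simp only [Nat.add_sub_cancel_left] at hj'l
          omega
  · intro hfull
    have hadm : AdmW ω n (extW n a) := fullW_admW hfull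
    refine ⟨mem_lang_of_adm hω0 hadm, ?_⟩
    intro m z hzl
    obtain ⟨xz, hxzY, hxzc⟩ := hzl
    refine ⟨_, glue_mem hω0 hfull hxzY, ?_⟩
    intro k
    by_cases hk : (k : ℕ) < n
    · have h1 : ((k : ℕ) : ℤ) < (n : ℤ) := by exact_mod_cast hk
      have h2 : (0:ℤ) ≤ ((k : ℕ) : ℤ) := Int.ofNat_nonneg _
      simp only [if_pos h1, if_pos h2]
      have : (⟨(k : ℕ), by omega⟩ : Fin (n + m)) = Fin.castAdd m ⟨(k : ℕ), hk⟩ := by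
        apply Fin.ext; simp
      have hk2 : k = Fin.castAdd m ⟨(k : ℕ), hk⟩ := by apply Fin.ext; simp
      rw [hk2, Fin.append_left]
      rw [Int.toNat_natCast]
      simp [extW, hk]
    · have h1 : ¬ (((k : ℕ) : ℤ) < (n : ℤ)) := by
        push_neg
        exact_mod_cast Nat.le_of_not_lt hk
      simp only [if_neg h1]
      have hkn : (k : ℕ) - n < m := by omega
      have hk2 : k = Fin.natAdd n ⟨(k : ℕ) - n, hkn⟩ := by apply Fin.ext; simp; omega
      rw [hk2, Fin.append_right]
      have := hxzc ⟨(k : ℕ) - n, hkn⟩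
      rw [← this]
      congr 1
      simp

end Follow
section Counting

variable {ω : ℕ → ℕ}

lemma extW_injective (n : ℕ) : Function.Injective (extW n) := by
  intro a a' h
  funext i
  have := congrFun h (i : ℕ)
  simpa [extW, i.isLt] using this

def AdmSet (ω : ℕ → ℕ) (n : ℕ) : Set (ℕ → ℕ) :=
  {b | AdmW ω n b ∧ ∀ i, n ≤ i → b i = 0}
def FullSet (ω : ℕ → ℕ) (n : ℕ) : Set (ℕ → ℕ) :=
  {b | FullW ω n b ∧ ∀ i, n ≤ i → b i = 0}

lemma admSet_eq_image (n : ℕ) :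
    AdmSet ω n = extW n '' {a : Fin n → ℕ | AdmW ω n (extW n a)} := by
  ext b
  constructor
  · rintro ⟨hb, hz⟩
    refine ⟨fun i => b i, ?_, ?_⟩
    · have : extW n (fun i : Fin n => b (i : ℕ)) = b := by
        funext i
        by_cases hi : i < n
        · simp [extW, hi]
        · simp [extW, hi, hz i (by omega)]
      simpa [Set.mem_setOf_eq, this] using hb
    · funext i
      by_cases hi : i < n
      · simp [extW, hi]
      · simp [extW, hi, hz i (by omega)]
  · rintro ⟨a, ha, rfl⟩
    exact ⟨ha, fun i hi => dif_neg (by omega)⟩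

lemma fullSet_eq_image (n : ℕ) :
    FullSet ω n = extW n '' {a : Fin n → ℕ | FullW ω n (extW n a)} := by
  ext b
  constructor
  · rintro ⟨hb, hz⟩
    refine ⟨fun i => b i, ?_, ?_⟩
    · have : extW n (fun i : Fin n => b (i : ℕ)) = b := by
        funext i
        by_cases hi : i < n
        · simp [extW, hi]
        · simp [extW, hi, hz i (by omega)]
      simpa [Set.mem_setOf_eq, this] using hb
    · funext i
      by_cases hi : i < n
      · simp [extW, hi]
      · simp [extW, hi, hz i (by omega)]
  · rintro ⟨a, ha, rfl⟩
    exact ⟨ha, fun i hi => dif_neg (by omega)⟩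

lemma finite_admSet (n : ℕ) : (AdmSet ω n).Finite := by
  have h1 : {a : Fin n → ℕ | AdmW ω n (extW n a)}.Finite := by
    apply Set.Finite.subset (Set.Finite.pi (fun _ : Fin n => Set.finite_Iic (ω 0)))
    intro a ha
    simp only [Set.mem_pi, Set.mem_univ, Set.mem_Iic, forall_const]
    intro i
    have := fullW_digit_le (p := (i : ℕ)) ha i.isLt
    simpa [extW, i.isLt] using this
  rw [admSet_eq_image]
  exact h1.image _

lemma finite_fullSet (n : ℕ) : (FullSet ω n).Finite := by
  apply (finite_admSet n).subset
  rintro b ⟨hb, hz⟩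
  exact ⟨fullW_admW hb, hz⟩

lemma lang_ncard (hω0 : 1 ≤ ω 0) (n : ℕ) :
    (langWords (betaShift ω) n).ncard = (AdmSet ω n).ncard := by
  rw [lang_eq_adm hω0, admSet_eq_image, Set.ncard_image_of_injective _ (extW_injective n)]

lemma follow_ncard (hω0 : 1 ≤ ω 0)
    (hsd : ∀ q, 1 ≤ q → ∃ j, (∀ i, i < j → ω (q + i) = ω i) ∧ ω (q + j) < ω j)
    (n : ℕ) :
    (followWords (betaShift ω) n).ncard = (FullSet ω n).ncard := by
  rw [follow_eq_full hω0 hsd, fullSet_eq_image,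
    Set.ncard_image_of_injective _ (extW_injective n)]

lemma zero_mem_fullSet (hω0 : 1 ≤ ω 0) (n : ℕ) : (fun _ : ℕ => 0) ∈ FullSet ω n :=
  ⟨fun p hp => ⟨0, by omega, fun i hi => by omega, by show 0 < ω 0; omega⟩, fun _ _ => rfl⟩

lemma fullSet_mono (hω0 : 1 ≤ ω 0) (n : ℕ) : FullSet ω n ⊆ FullSet ω (n + 1) := by
  rintro b ⟨hb, hz⟩
  refine ⟨?_, fun i hi => hz i (by omega)⟩
  intro p hp
  by_cases hpn : p < n
  · obtain ⟨j, hj, hje, hjl⟩ := hb p hpn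
    exact ⟨j, by omega, hje, hjl⟩
  · refine ⟨0, by omega, fun i hi => by omega, ?_⟩
    rw [hz _ (by omega)]
    omega

/-- the length of the longest suffix of `b` (as a word of length `n`) equal to a prefix of ω -/
def MS (ω : ℕ → ℕ) (n : ℕ) (b : ℕ → ℕ) : ℕ :=
  Nat.findGreatest (fun m => ∀ i, i < m → b (n - m + i) = ω i) n

lemma MS_le (n : ℕ) (b : ℕ → ℕ) : MS ω n b ≤ n := Nat.findGreatest_le n

lemma MS_spec (n : ℕ) (b : ℕ → ℕ) : ∀ i, i < MS ω n b → b (n - MS ω n b + i) = ω i := by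
  have h := Nat.findGreatest_spec (P := fun m => ∀ i, i < m → b (n - m + i) = ω i)
    (m := 0) (Nat.zero_le n) (fun i hi => absurd hi (Nat.not_lt_zero i))
  exact h

lemma MS_max (n : ℕ) (b : ℕ → ℕ) {m : ℕ} (h1 : MS ω n b < m) (h2 : m ≤ n) :
    ¬ (∀ i, i < m → b (n - m + i) = ω i) :=
  Nat.findGreatest_is_greatest h1 h2

def trunc (k : ℕ) (b : ℕ → ℕ) : ℕ → ℕ := fun i => if i < k then b i else 0

lemma trunc_mem_fullSet
    (hsd : ∀ q, 1 ≤ q → ∃ j, (∀ i, i < j → ω (q + i) = ω i) ∧ ω (q + j) < ω j)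
    {n : ℕ} {b : ℕ → ℕ} (hb : b ∈ AdmSet ω n) :
    trunc (n - MS ω n b) b ∈ FullSet ω (n - MS ω n b) := by
  obtain ⟨hadm, hz⟩ := hb
  have hspec := MS_spec (ω := ω) n b
  have hle := MS_le (ω := ω) n b
  have hmax := fun (m' : ℕ) (h1 : MS ω n b < m') (h2 : m' ≤ n) => MS_max (ω := ω) n b h1 h2
  generalize hmdef : MS ω n b = m at hspec hle hmax ⊢
  have hmn : m ≤ n := hle
  generalize hkdef : n - m = k at hspec ⊢
  have hkm : k = n - m := hkdef.symm
  refine ⟨?_, fun i hi => if_neg (by omega)⟩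
  intro p hp
  by_contra hnd
  -- the suffix of b starting at p matches ω up to k
  have hmatch : ∀ i, p + i < k → b (p + i) = ω i := by
    rcases hadm p (by omega) with he | ⟨j, hj, hje, hjl⟩
    · exact fun i hi => he i (by omega)
    · by_cases hjk : p + j < k
      · exfalso
        exact hnd ⟨j, hjk, fun i hi => by
          rw [show trunc k b (p + i) = b (p + i) from if_pos (by omega)]
          exact hje i hi,
          by rw [show trunc k b (p + j) = b (p + j) from if_pos hjk]; exact hjl⟩
      · exact fun i hi => hje i (by omega)
  set q := k - p with hqdef
  clear_value q
  have hq1 : 1 ≤ q := by omega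
  obtain ⟨jq, hje, hjl⟩ := hsd q hq1
  by_cases hjm : jq < m
  · -- contradiction with admissibility of b at p
    have hbig : ∀ i, i < q + jq → b (p + i) = ω i := by
      intro i hi
      by_cases hiq : i < q
      · exact hmatch i (by omega)
      · have h1 : b (p + i) = ω (i - q) := by
          have := hspec (i - q) (by omega)
          rw [show k + (i - q) = p + i by omega] at this
          exact this
        rw [h1, ← hje (i - q) (by omega), show q + (i - q) = i by omega]
    have hval : b (p + (q + jq)) = ω jq := by
      have := hspec jq hjm
      rw [show k + jq = p + (q + jq) by omega] at this
      exact this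
    have hlt : p + (q + jq) < n := by omega
    rcases hadm p (by omega) with he | ⟨j', hj', hj'e, hj'l⟩
    · have := he (q + jq) hlt
      rw [hval] at this
      omega
    · rcases lt_trichotomy j' (q + jq) with h1 | h1 | h1
      · have := hbig j' h1
        omega
      · subst h1
        rw [hval] at hj'l
        omega
      · have := hj'e (q + jq) h1
        rw [hval] at this
        omega
  · -- the suffix of length m + q also matches, contradicting maximality
    apply hmax (m + q) (by omega) (by omega)
    intro i hi
    rw [show n - (m + q) = p by omega]
    by_cases hiq : i < q
    · exact hmatch i (by omega)
    · have h1 : b (p + i) = ω (i - q) := by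
        have := hspec (i - q) (by omega)
        rw [show k + (i - q) = p + i by omega] at this
        exact this
      rw [h1, ← hje (i - q) (by omega), show q + (i - q) = i by omega]

lemma adm_ncard_le
    (hsd : ∀ q, 1 ≤ q → ∃ j, (∀ i, i < j → ω (q + i) = ω i) ∧ ω (q + j) < ω j)
    (n : ℕ) :
    (AdmSet ω n).ncard ≤ ∑ m ∈ Finset.range (n + 1), (FullSet ω (n - m)).ncard := by
  classical
  have hfin := finite_admSet (ω := ω) n
  set A := hfin.toFinset with hA
  rw [Set.ncard_eq_toFinset_card _ hfin]
  have hcard : A.card = ∑ m ∈ Finset.range (n + 1),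
      (A.filter fun b => MS ω n b = m).card := by
    apply Finset.card_eq_sum_card_fiberwise
    intro b _
    simp only [Finset.mem_coe, Finset.mem_range]
    exact lt_of_le_of_lt (MS_le n b) (Nat.lt_succ_self n)
  rw [show hfin.toFinset.card = A.card from rfl, hcard]
  apply Finset.sum_le_sum
  intro m _
  rw [Set.ncard_eq_toFinset_card _ (finite_fullSet (ω := ω) (n - m))]
  apply Finset.card_le_card_of_injOn (fun b => trunc (n - m) b)
  · intro b hb
    simp only [Finset.mem_coe, Finset.mem_filter, hA, Set.Finite.mem_toFinset] at hb ⊢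
    obtain ⟨hbA, hbm⟩ := hb
    have := trunc_mem_fullSet hsd hbA
    rwa [hbm] at this
  · intro b hb b' hb' heq
    simp only [Finset.mem_coe, Finset.mem_filter, hA, Set.Finite.mem_toFinset] at hb hb'
    obtain ⟨⟨hbadm, hbz⟩, hbm⟩ := hb
    obtain ⟨⟨hb'adm, hb'z⟩, hb'm⟩ := hb'
    funext i
    by_cases h1 : i < n - m
    · have := congrFun heq i
      simpa [trunc, h1] using this
    · by_cases h2 : i < n
      · have e1 : b i = ω (i - (n - m)) := by
          have hbs := MS_spec (ω := ω) n b
          rw [hbm] at hbs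
          have := hbs (i - (n - m)) (by omega)
          rw [show n - m + (i - (n - m)) = i by omega] at this
          exact this
        have e2 : b' i = ω (i - (n - m)) := by
          have hbs := MS_spec (ω := ω) n b'
          rw [hb'm] at hbs
          have := hbs (i - (n - m)) (by omega)
          rw [show n - m + (i - (n - m)) = i by omega] at this
          exact this
        rw [e1, e2]
      · rw [hbz i (by omega), hb'z i (by omega)]

end Counting
section RealBounds

variable {β : ℝ} (hβ : 1 < β) {ω : ℕ → ℕ}
  (h1 : (∑' n : ℕ, (ω n : ℝ) / β ^ (n + 1)) = 1)
  (h2 : ∀ n : ℕ, 1 < (∑ k ∈ Finset.range (n + 1), (ω k : ℝ) / β ^ (k + 1)) + 1 / β ^ (n + 1))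

noncomputable def val (β : ℝ) (n : ℕ) (b : ℕ → ℕ) : ℝ :=
  ∑ i ∈ Finset.range n, (b i : ℝ) / β ^ (i + 1)

include hβ

lemma val_nonneg (n : ℕ) (b : ℕ → ℕ) : 0 ≤ val β n b := by
  have hb : (0:ℝ) < β := lt_trans one_pos hβ
  exact Finset.sum_nonneg fun i _ => by positivity

lemma val_split (n : ℕ) (b : ℕ → ℕ) {j : ℕ} (hj : j < n) :
    val β n b = (∑ i ∈ Finset.range (j + 1), (b i : ℝ) / β ^ (i + 1)) +
      (1 / β ^ (j + 1)) * val β (n - (j + 1)) (fun i => b (j + 1 + i)) := by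
  have hb : (0:ℝ) < β := lt_trans one_pos hβ
  unfold val
  rw [Finset.range_eq_Ico, ← Finset.sum_Ico_consecutive _ (by omega : 0 ≤ j + 1) (by omega : j + 1 ≤ n)]
  congr 1
  · rw [Finset.range_eq_Ico]
  · rw [Finset.sum_Ico_eq_sum_range, Finset.mul_sum]
    apply Finset.sum_congr rfl
    intro i _
    rw [show j + 1 + i + 1 = (j + 1) + (i + 1) by ring, pow_add]
    rw [div_mul_div_comm, one_mul]

include h1

lemma full_val_le : ∀ n (b : ℕ → ℕ), FullW ω n b → val β n b ≤ 1 - 1 / β ^ n := by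
  have hb : (0:ℝ) < β := lt_trans one_pos hβ
  intro n
  induction n using Nat.strong_induction_on with
  | _ n ih =>
    intro b hfull
    rcases Nat.eq_zero_or_pos n with rfl | hn
    · simp [val]
    · obtain ⟨j, hj, hje, hjl⟩ := hfull 0 hn
      simp only [Nat.zero_add] at hj hje hjl
      have hsplit := val_split hβ n b hj
      have hIH := ih (n - (j + 1)) (by omega) (fun i => b (j + 1 + i))
        (by simpa using fullW_suffix hfull (j + 1))
      have hhead : ∑ i ∈ Finset.range (j + 1), (b i : ℝ) / β ^ (i + 1)
          ≤ v β ω (j + 1) - 1 / β ^ (j + 1) := by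
        rw [Finset.sum_range_succ]
        unfold v
        rw [Finset.sum_range_succ]
        have he : ∑ i ∈ Finset.range j, (b i : ℝ) / β ^ (i + 1)
            = ∑ i ∈ Finset.range j, (ω i : ℝ) / β ^ (i + 1) :=
          Finset.sum_congr rfl fun i hi => by rw [hje i (Finset.mem_range.1 hi)]
        rw [he]
        have hc : (b j : ℝ) + 1 ≤ (ω j : ℝ) := by exact_mod_cast hjl
        have hp : (0:ℝ) < β ^ (j + 1) := by positivity
        have hd : (b j : ℝ) / β ^ (j + 1) ≤ ((ω j : ℝ) - 1) / β ^ (j + 1) := by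
          gcongr
          linarith
        rw [sub_div] at hd
        linarith
      have hv1 : v β ω (j + 1) ≤ 1 := v_le_one hβ h1 (j + 1)
      have hval' : 0 ≤ val β (n - (j + 1)) (fun i => b (j + 1 + i)) :=
        val_nonneg hβ _ _
      have hp1 : (0:ℝ) < β ^ (j + 1) := by positivity
      have hkey : (1 / β ^ (j + 1)) * (1 - 1 / β ^ (n - (j + 1))) =
          1 / β ^ (j + 1) - 1 / β ^ n := by
        rw [mul_sub, mul_one, div_mul_div_comm, one_mul, ← pow_add,
          show (j + 1) + (n - (j + 1)) = n from by omega]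
      have hmul : (1 / β ^ (j + 1)) * val β (n - (j + 1)) (fun i => b (j + 1 + i))
          ≤ 1 / β ^ (j + 1) - 1 / β ^ n := by
        calc (1 / β ^ (j + 1)) * val β (n - (j + 1)) (fun i => b (j + 1 + i))
            ≤ (1 / β ^ (j + 1)) * (1 - 1 / β ^ (n - (j + 1))) := by
              apply mul_le_mul_of_nonneg_left hIH (by positivity)
          _ = 1 / β ^ (j + 1) - 1 / β ^ n := hkey
      rw [hsplit]
      linarith

lemma val_gap {n : ℕ} {b b' : ℕ → ℕ} (hfb : FullW ω n b) {j : ℕ} (hjn : j < n)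
    (hpre : ∀ i, i < j → b i = b' i) (hlt : b j < b' j) :
    val β n b + 1 / β ^ n ≤ val β n b' := by
  have hb : (0:ℝ) < β := lt_trans one_pos hβ
  have hsplit := val_split hβ n b hjn
  have hIH := full_val_le hβ h1 (n - (j + 1)) (fun i => b (j + 1 + i))
    (by simpa using fullW_suffix hfb (j + 1))
  have hp1 : (0:ℝ) < β ^ (j + 1) := by positivity
  have hkey : (1 / β ^ (j + 1)) * (1 - 1 / β ^ (n - (j + 1))) =
      1 / β ^ (j + 1) - 1 / β ^ n := by
    rw [mul_sub, mul_one, div_mul_div_comm, one_mul, ← pow_add,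
      show (j + 1) + (n - (j + 1)) = n from by omega]
  have hub : val β n b ≤ (∑ i ∈ Finset.range j, (b i : ℝ) / β ^ (i + 1)) +
      (b j : ℝ) / β ^ (j + 1) + (1 / β ^ (j + 1) - 1 / β ^ n) := by
    rw [hsplit, Finset.sum_range_succ]
    have : (1 / β ^ (j + 1)) * val β (n - (j + 1)) (fun i => b (j + 1 + i))
        ≤ 1 / β ^ (j + 1) - 1 / β ^ n := by
      calc (1 / β ^ (j + 1)) * val β (n - (j + 1)) (fun i => b (j + 1 + i))
          ≤ (1 / β ^ (j + 1)) * (1 - 1 / β ^ (n - (j + 1))) :=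
            mul_le_mul_of_nonneg_left hIH (by positivity)
        _ = _ := hkey
    linarith
  have hlb : (∑ i ∈ Finset.range j, (b i : ℝ) / β ^ (i + 1)) +
      ((b j : ℝ) + 1) / β ^ (j + 1) ≤ val β n b' := by
    have hsub : ∑ i ∈ Finset.range (j + 1), (b' i : ℝ) / β ^ (i + 1) ≤ val β n b' := by
      apply Finset.sum_le_sum_of_subset_of_nonneg
      · exact Finset.range_subset_range.2 (by omega)
      · intro i _ _; positivity
    have heq : ∑ i ∈ Finset.range j, (b' i : ℝ) / β ^ (i + 1)
        = ∑ i ∈ Finset.range j, (b i : ℝ) / β ^ (i + 1) :=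
      Finset.sum_congr rfl fun i hi => by rw [hpre i (Finset.mem_range.1 hi)]
    rw [Finset.sum_range_succ, heq] at hsub
    have hc : (b j : ℝ) + 1 ≤ (b' j : ℝ) := by exact_mod_cast hlt
    have := div_le_div_of_nonneg_right (c := β ^ (j + 1)) hc hp1.le
    linarith
  have h3 : ((b j : ℝ) + 1) / β ^ (j + 1) = (b j : ℝ) / β ^ (j + 1) + 1 / β ^ (j + 1) := by
    rw [add_div]
  linarith

lemma full_ncard_le' (n : ℕ) : ((FullSet ω n).ncard : ℝ) ≤ β ^ n := by
  classical
  have hb : (0:ℝ) < β := lt_trans one_pos hβ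
  have hbn : (0:ℝ) < β ^ n := by positivity
  have key : ∀ (c c' : ℕ → ℕ), c ∈ FullSet ω n → c' ∈ FullSet ω n → {j : ℕ} → j < n →
      (∀ i, i < j → c i = c' i) → c j < c' j →
      ⌊β ^ n * val β n c⌋₊ ≠ ⌊β ^ n * val β n c'⌋₊ := by
    intro c c' hc _hc' j hjn hpre hlt hfeq
    have hgap := val_gap hβ h1 hc.1 hjn hpre hlt
    have hmono : β ^ n * val β n c + 1 ≤ β ^ n * val β n c' := by
      have := mul_le_mul_of_nonneg_left hgap hbn.le
      rw [mul_add, mul_one_div, div_self (ne_of_gt hbn)] at this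
      linarith
    have hfl : (⌊β ^ n * val β n c⌋₊ : ℝ) ≤ β ^ n * val β n c :=
      Nat.floor_le (by have := val_nonneg hβ (β := β) n c; positivity)
    have hstep : ((⌊β ^ n * val β n c⌋₊ + 1 : ℕ) : ℝ) ≤ β ^ n * val β n c' := by
      push_cast; linarith
    have := Nat.le_floor hstep
    omega
  have hmain : (FullSet ω n).ncard ≤ ⌊β ^ n⌋₊ := by
    have hg := Set.ncard_le_ncard_of_injOn (s := FullSet ω n)
      (t := ↑(Finset.range ⌊β ^ n⌋₊))
      (fun b => ⌊β ^ n * val β n b⌋₊) ?_ ?_ (Finset.range _).finite_toSet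
    · rwa [Set.ncard_coe_finset, Finset.card_range] at hg
    · rintro b ⟨hf, _hz⟩
      have hle := full_val_le hβ h1 n b hf
      have h0 : 0 ≤ val β n b := val_nonneg hβ n b
      have hup : (⌊β ^ n * val β n b⌋₊ : ℝ) ≤ β ^ n - 1 := by
        have hfl := Nat.floor_le (by positivity : (0:ℝ) ≤ β ^ n * val β n b)
        have hmul : β ^ n * val β n b ≤ β ^ n * (1 - 1 / β ^ n) :=
          mul_le_mul_of_nonneg_left hle hbn.le
        have hsimp : β ^ n * (1 - 1 / β ^ n) = β ^ n - 1 := by field_simp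
        linarith
      simp only [Finset.coe_range, Set.mem_Iio]
      have hc : ((⌊β ^ n * val β n b⌋₊ + 1 : ℕ) : ℝ) ≤ β ^ n := by push_cast; linarith
      have := Nat.le_floor hc
      omega
    · rintro b hbm b' hb'm heq
      by_contra hne
      have hex : ∃ i, b i ≠ b' i := by
        by_contra hall; push_neg at hall; exact hne (funext hall)
      have hjne : b (Nat.find hex) ≠ b' (Nat.find hex) := Nat.find_spec hex
      have hjpre : ∀ i, i < Nat.find hex → b i = b' i := fun i hi => by
        have := Nat.find_min hex hi; push_neg at this; exact this
      have hjn : Nat.find hex < n := by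
        by_contra hge
        exact hjne (by rw [hbm.2 _ (by omega), hb'm.2 _ (by omega)])
      rcases lt_or_gt_of_ne hjne with hlt | hgt
      · exact key b b' hbm hb'm hjn hjpre hlt heq
      · exact key b' b hb'm hbm hjn (fun i hi => (hjpre i hi).symm) hgt heq.symm
  calc ((FullSet ω n).ncard : ℝ) ≤ (⌊β ^ n⌋₊ : ℝ) := by exact_mod_cast hmain
    _ ≤ β ^ n := Nat.floor_le hbn.le

end RealBounds

section Greedy

variable {β : ℝ} (hβ : 1 < β) {ω : ℕ → ℕ}
  (h1 : (∑' n : ℕ, (ω n : ℝ) / β ^ (n + 1)) = 1)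
  (h2 : ∀ n : ℕ, 1 < (∑ k ∈ Finset.range (n + 1), (ω k : ℝ) / β ^ (k + 1)) + 1 / β ^ (n + 1))

noncomputable def rem (β : ℝ) (x : ℝ) : ℕ → ℝ
  | 0 => x
  | (i+1) => β * rem β x i - ⌊β * rem β x i⌋₊

noncomputable def dig (β : ℝ) (x : ℝ) (i : ℕ) : ℕ := ⌊β * rem β x i⌋₊

include hβ

lemma rem_mem {x : ℝ} (hx0 : 0 ≤ x) (hx1 : x < 1) :
    ∀ i, 0 ≤ rem β x i ∧ rem β x i < 1 := by
  have hb : (0:ℝ) < β := lt_trans one_pos hβ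
  intro i
  induction i with
  | zero => exact ⟨hx0, hx1⟩
  | succ i ih =>
    have h0 : 0 ≤ β * rem β x i := by nlinarith [ih.1]
    constructor
    · have := Nat.floor_le h0
      simpa [rem] using sub_nonneg.2 this
    · have := Nat.lt_floor_add_one (β * rem β x i)
      simp only [rem]
      linarith

omit hβ in
lemma rem_shift (x : ℝ) (p : ℕ) : ∀ i, rem β (rem β x p) i = rem β x (p + i) := by
  intro i
  induction i with
  | zero => rfl
  | succ i ih =>
    show β * rem β (rem β x p) i - ↑⌊β * rem β (rem β x p) i⌋₊ = _
    rw [ih]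
    rfl

omit hβ in
lemma dig_shift (x : ℝ) (p i : ℕ) : dig β (rem β x p) i = dig β x (p + i) := by
  unfold dig
  rw [rem_shift]

lemma x_eq_val (x : ℝ) :
    ∀ nn, x = (∑ i ∈ Finset.range nn, (dig β x i : ℝ) / β ^ (i + 1)) + rem β x nn / β ^ nn := by
  have hb : (0:ℝ) < β := lt_trans one_pos hβ
  intro nn
  induction nn with
  | zero => simp [rem]
  | succ nn ih =>
    rw [Finset.sum_range_succ]
    have hrec : rem β x (nn + 1) = β * rem β x nn - dig β x nn := rfl
    have : rem β x nn / β ^ nn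
        = (dig β x nn : ℝ) / β ^ (nn + 1) + rem β x (nn + 1) / β ^ (nn + 1) := by
      rw [hrec]
      field_simp
      ring
    linarith [ih, this]

include h2

lemma greedy_P {y : ℝ} (hy0 : 0 ≤ y) (hy1 : y < 1) (L : ℕ) :
    (∀ i, i < L → dig β y i = ω i) ∨
      ∃ j, j < L ∧ (∀ i, i < j → dig β y i = ω i) ∧ dig β y j < ω j := by
  classical
  have hb : (0:ℝ) < β := lt_trans one_pos hβ
  by_cases hall : ∀ i, i < L → dig β y i = ω i
  · exact Or.inl hall
  · right
    push_neg at hall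
    obtain ⟨i0, hi0L, hi0⟩ := hall
    have hex : ∃ i, dig β y i ≠ ω i := ⟨i0, hi0⟩
    refine ⟨Nat.find hex, by
      have := Nat.find_min' hex hi0; omega, fun i hi => by
      have := Nat.find_min hex hi; push_neg at this; exact this, ?_⟩
    set j := Nat.find hex with hj
    have hjne : dig β y j ≠ ω j := Nat.find_spec hex
    have hjpre : ∀ i, i < j → dig β y i = ω i := fun i hi => by
      have := Nat.find_min hex hi; push_neg at this; exact this
    by_contra hge
    have hgt : ω j + 1 ≤ dig β y j := by omega
    -- y ≥ v (j+1) + 1/β^(j+1) > 1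
    have hsum := x_eq_val hβ y (j + 1)
    have hrge : 0 ≤ rem β y (j + 1) / β ^ (j + 1) := by
      have := (rem_mem hβ hy0 hy1 (j + 1)).1
      positivity
    have hlow : (∑ i ∈ Finset.range (j + 1), (ω i : ℝ) / β ^ (i + 1)) + 1 / β ^ (j + 1) ≤ y := by
      rw [hsum]
      have hterm : ∀ i ∈ Finset.range j, (ω i : ℝ) / β ^ (i + 1) = (dig β y i : ℝ) / β ^ (i + 1) :=
        fun i hi => by rw [hjpre i (Finset.mem_range.1 hi)]
      rw [Finset.sum_range_succ, Finset.sum_range_succ, Finset.sum_congr rfl hterm]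
      have hc : (ω j : ℝ) + 1 ≤ (dig β y j : ℝ) := by exact_mod_cast hgt
      have hd : ((ω j : ℝ) + 1) / β ^ (j + 1) ≤ (dig β y j : ℝ) / β ^ (j + 1) := by gcongr
      rw [add_div] at hd
      linarith
    have := h2 j
    linarith

lemma greedy_mem_adm {x : ℝ} (hx0 : 0 ≤ x) (hx1 : x < 1) (n : ℕ) :
    (fun i => if i < n then dig β x i else 0) ∈ AdmSet ω n := by
  refine ⟨?_, fun i hi => if_neg (by omega)⟩
  intro p hp
  have hy := rem_mem hβ hx0 hx1 p
  rcases greedy_P hβ h2 hy.1 hy.2 (n - p) with he | ⟨j, hj, hje, hjl⟩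
  · left
    intro i hi
    show (if p + i < n then dig β x (p + i) else 0) = ω i
    rw [if_pos hi]
    have := he i (by omega)
    rwa [dig_shift] at this
  · right
    refine ⟨j, by omega, fun i hi => ?_, ?_⟩
    · show (if p + i < n then dig β x (p + i) else 0) = ω i
      rw [if_pos (by omega)]
      have := hje i hi
      rwa [dig_shift] at this
    · show (if p + j < n then dig β x (p + j) else 0) < ω j
      rw [if_pos (by omega)]
      have := hjl
      rwa [dig_shift] at this

lemma adm_ncard_ge (n : ℕ) : β ^ n ≤ ((AdmSet ω n).ncard : ℝ) := by
  classical
  have hb : (0:ℝ) < β := lt_trans one_pos hβ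
  have hbn : (0:ℝ) < β ^ n := by positivity
  set N := ⌈β ^ n⌉₊ with hN
  have hxmem : ∀ k : ℕ, k < N → 0 ≤ (k : ℝ) / β ^ n ∧ (k : ℝ) / β ^ n < 1 := by
    intro k hk
    constructor
    · positivity
    · rw [div_lt_one hbn]
      have h1' : (k : ℝ) + 1 ≤ N := by exact_mod_cast hk
      have h2' : (N : ℝ) < β ^ n + 1 := Nat.ceil_lt_add_one hbn.le
      linarith
  have hinj : Set.InjOn (fun k : ℕ => (fun i => if i < n then dig β ((k : ℝ) / β ^ n) i else 0))
      ↑(Finset.range N) := by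
    rintro k hk k' hk' heq
    simp only [Finset.coe_range, Set.mem_Iio] at hk hk'
    have hdig : ∀ i, i < n → dig β ((k : ℝ) / β ^ n) i = dig β ((k' : ℝ) / β ^ n) i := by
      intro i hi
      have := congrFun heq i
      simpa [if_pos hi] using this
    have hs : ∑ i ∈ Finset.range n, (dig β ((k : ℝ) / β ^ n) i : ℝ) / β ^ (i + 1)
        = ∑ i ∈ Finset.range n, (dig β ((k' : ℝ) / β ^ n) i : ℝ) / β ^ (i + 1) :=
      Finset.sum_congr rfl fun i hi => by rw [hdig i (Finset.mem_range.1 hi)]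
    have he1 := x_eq_val hβ ((k : ℝ) / β ^ n) n
    have he2 := x_eq_val hβ ((k' : ℝ) / β ^ n) n
    have hr1 := rem_mem hβ (hxmem k hk).1 (hxmem k hk).2 n
    have hr2 := rem_mem hβ (hxmem k' hk').1 (hxmem k' hk').2 n
    have hk1 := congrArg (· * β ^ n) he1
    have hk2 := congrArg (· * β ^ n) he2
    simp only [add_mul, div_mul_cancel₀ _ (ne_of_gt hbn)] at hk1 hk2
    have hSS : (∑ i ∈ Finset.range n, (dig β ((k : ℝ) / β ^ n) i : ℝ) / β ^ (i + 1)) * β ^ n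
        = (∑ i ∈ Finset.range n, (dig β ((k' : ℝ) / β ^ n) i : ℝ) / β ^ (i + 1)) * β ^ n := by
      rw [hs]
    have hlt1 : (k : ℝ) < (k' : ℝ) + 1 := by
      rw [hk1, hk2]
      linarith [hr1.1, hr1.2, hr2.1, hr2.2]
    have hlt2 : (k' : ℝ) < (k : ℝ) + 1 := by
      rw [hk1, hk2]
      linarith [hr1.1, hr1.2, hr2.1, hr2.2]
    have hc1 : (k : ℤ) < (k' : ℤ) + 1 := by exact_mod_cast hlt1
    have hc2 : (k' : ℤ) < (k : ℤ) + 1 := by exact_mod_cast hlt2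
    omega
  have hmaps : ∀ k ∈ (↑(Finset.range N) : Set ℕ),
      (fun i => if i < n then dig β ((k : ℝ) / β ^ n) i else 0) ∈ AdmSet ω n := by
    intro k hk
    simp only [Finset.coe_range, Set.mem_Iio] at hk
    exact greedy_mem_adm hβ h2 (hxmem k hk).1 (hxmem k hk).2 n
  have hcard := Set.ncard_le_ncard_of_injOn _ hmaps hinj (finite_admSet n)
  rw [Set.ncard_coe_finset, Finset.card_range] at hcard
  calc β ^ n ≤ (N : ℝ) := Nat.le_ceil _
    _ ≤ _ := by exact_mod_cast hcard

end Greedy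

section Assembly

lemma exists_const {β : ℝ} (hβ : 1 < β) (G : ℕ → ℝ)
    (hG1 : ∀ k, 1 ≤ G k) (hGm : Monotone G) (hGle : ∀ k, G k ≤ β ^ k)
    (hsum : ∀ n, β ^ n ≤ ∑ k ∈ Finset.range (n + 1), G k) :
    ∃ c : ℝ, 0 < c ∧ ∀ n, c * β ^ n ≤ G n := by
  have hb : (0:ℝ) < β := lt_trans one_pos hβ
  have hb1 : (0:ℝ) < β - 1 := by linarith
  obtain ⟨j₀, hj₀⟩ := pow_unbounded_of_one_lt (2 * β / (β - 1)) hβ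
  have hBpos : (0:ℝ) < β ^ j₀ := by positivity
  have hj₀' : 2 * β < β ^ j₀ * (β - 1) := by
    rw [div_lt_iff₀ hb1] at hj₀
    linarith
  refine ⟨(β - 1) / (2 * β) / β ^ j₀, by positivity, ?_⟩
  set c := (β - 1) / (2 * β) / β ^ j₀ with hc
  intro n
  by_cases hn : n ≤ j₀
  · have h1 : c * β ^ n ≤ c * β ^ j₀ := by
      apply mul_le_mul_of_nonneg_left (pow_le_pow_right₀ hβ.le hn) (by positivity)
    have h2 : c * β ^ j₀ = (β - 1) / (2 * β) := div_mul_cancel₀ _ (ne_of_gt hBpos)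
    have h3 : (β - 1) / (2 * β) ≤ 1 := by
      rw [div_le_one (by positivity)]
      linarith
    calc c * β ^ n ≤ c * β ^ j₀ := h1
      _ = (β - 1) / (2 * β) := h2
      _ ≤ 1 := h3
      _ ≤ G n := hG1 n
  · push_neg at hn
    have hcl : ∃ k, n - j₀ ≤ k ∧ k ≤ n ∧ (β - 1) / (2 * β) * β ^ k ≤ G k := by
      by_contra hno
      push_neg at hno
      have hsplit : ∑ k ∈ Finset.range (n + 1), G k =
          (∑ k ∈ Finset.range (n - j₀), G k) + ∑ k ∈ Finset.Ico (n - j₀) (n + 1), G k := by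
        have h := Finset.sum_Ico_consecutive (fun k => G k) (Nat.zero_le (n - j₀))
          (show n - j₀ ≤ n + 1 by omega)
        rw [Finset.range_eq_Ico, ← h, Finset.range_eq_Ico]
      have hpow : β ^ n = β ^ (n - j₀) * β ^ j₀ := by
        rw [← pow_add]
        congr 1
        omega
      have hApos : (0:ℝ) < β ^ (n - j₀) := by positivity
      have hfirst : ∑ k ∈ Finset.range (n - j₀), G k ≤ β ^ n / 2 := by
        have hle1 : ∑ k ∈ Finset.range (n - j₀), G k ≤ ∑ k ∈ Finset.range (n - j₀), β ^ k :=
          Finset.sum_le_sum fun k _ => hGle k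
        rw [geom_sum_eq (ne_of_gt hβ)] at hle1
        have h2'' : (β ^ (n - j₀) - 1) / (β - 1) ≤ β ^ n / 2 := by
          rw [div_le_div_iff₀ hb1 (by norm_num : (0:ℝ) < 2), hpow]
          nlinarith
        linarith
      have hsecond : ∑ k ∈ Finset.Ico (n - j₀) (n + 1), G k < β ^ n / 2 := by
        have hlt : ∑ k ∈ Finset.Ico (n - j₀) (n + 1), G k <
            ∑ k ∈ Finset.Ico (n - j₀) (n + 1), (β - 1) / (2 * β) * β ^ k := by
          apply Finset.sum_lt_sum_of_nonempty
          · exact ⟨n - j₀, Finset.mem_Ico.2 ⟨le_refl _, by omega⟩⟩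
          · intro k hk
            obtain ⟨hk1, hk2⟩ := Finset.mem_Ico.1 hk
            exact hno k hk1 (by omega)
        have hsub : ∑ k ∈ Finset.Ico (n - j₀) (n + 1), (β - 1) / (2 * β) * β ^ k ≤
            ∑ k ∈ Finset.range (n + 1), (β - 1) / (2 * β) * β ^ k := by
          apply Finset.sum_le_sum_of_subset_of_nonneg
          · intro k hk
            obtain ⟨_, hk2⟩ := Finset.mem_Ico.1 hk
            exact Finset.mem_range.2 hk2
          · intro k _ _
            positivity
        have hgeo : ∑ k ∈ Finset.range (n + 1), (β - 1) / (2 * β) * β ^ k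
            = (β - 1) / (2 * β) * ((β ^ (n + 1) - 1) / (β - 1)) := by
          rw [← Finset.mul_sum, geom_sum_eq (ne_of_gt hβ)]
        have hfin : (β - 1) / (2 * β) * ((β ^ (n + 1) - 1) / (β - 1)) < β ^ n / 2 := by
          have he : (β - 1) / (2 * β) * ((β ^ (n + 1) - 1) / (β - 1))
              = (β ^ (n + 1) - 1) / (2 * β) := by
            field_simp
          rw [he, div_lt_div_iff₀ (by positivity) (by norm_num : (0:ℝ) < 2), pow_succ]
          nlinarith
        linarith
      have := hsum n
      rw [hsplit] at this
      linarith
    obtain ⟨k, hk1, hk2, hk3⟩ := hcl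
    have hstep : (β - 1) / (2 * β) * β ^ (n - j₀) ≤ (β - 1) / (2 * β) * β ^ k :=
      mul_le_mul_of_nonneg_left (pow_le_pow_right₀ hβ.le hk1) (by positivity)
    have hceq : c * β ^ n = (β - 1) / (2 * β) * β ^ (n - j₀) := by
      rw [hc, show β ^ n = β ^ (n - j₀) * β ^ j₀ from by rw [← pow_add]; congr 1; omega]
      field_simp
    calc c * β ^ n = (β - 1) / (2 * β) * β ^ (n - j₀) := hceq
      _ ≤ (β - 1) / (2 * β) * β ^ k := hstep
      _ ≤ G k := hk3
      _ ≤ G n := hGm hk2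

end Assembly

end Aux

open Aux in
theorem betaShift_word_counts
    (β : ℝ) (hβ : 1 < β) (ω : ℕ → ℕ) (hω : IsGreedyExpansionOfOne β ω) :
    ∃ c : ℝ, 0 < c ∧
      ∀ n : ℕ, 1 ≤ n →
        c * β ^ n ≤ ((followWords (betaShift ω) n).ncard : ℝ) ∧
        ((followWords (betaShift ω) n).ncard : ℝ) ≤ β ^ n ∧
        1 ≤ ((langWords (betaShift ω) n).ncard : ℝ) / ((followWords (betaShift ω) n).ncard : ℝ) ∧
        ((langWords (betaShift ω) n).ncard : ℝ) / ((followWords (betaShift ω) n).ncard : ℝ) ≤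
          c⁻¹ * (β / (β - 1)) := by
  obtain ⟨h1, h2, _h3⟩ := hω
  have hb : (0:ℝ) < β := lt_trans one_pos hβ
  have hb1 : (0:ℝ) < β - 1 := by linarith
  have hω0 : 1 ≤ ω 0 := omega0_pos hβ h1 h2
  have hsd := shift_drop hβ h1 h2
  set G : ℕ → ℝ := fun k => ((FullSet ω k).ncard : ℝ) with hG
  have hG1 : ∀ k, 1 ≤ G k := by
    intro k
    have hpos : 0 < (FullSet ω k).ncard :=
      (Set.ncard_pos (finite_fullSet k)).2 ⟨_, zero_mem_fullSet hω0 k⟩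
    show (1:ℝ) ≤ ((FullSet ω k).ncard : ℝ)
    exact_mod_cast hpos
  have hGm : Monotone G := by
    apply monotone_nat_of_le_succ
    intro k
    have := Set.ncard_le_ncard (fullSet_mono hω0 k) (finite_fullSet (k + 1))
    show ((FullSet ω k).ncard : ℝ) ≤ ((FullSet ω (k + 1)).ncard : ℝ)
    exact_mod_cast this
  have hGle : ∀ k, G k ≤ β ^ k := fun k => full_ncard_le' hβ h1 k
  have hsum : ∀ n, β ^ n ≤ ∑ k ∈ Finset.range (n + 1), G k := by
    intro n
    have hlow := adm_ncard_ge hβ h2 (ω := ω) n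
    have hup := adm_ncard_le (ω := ω) hsd n
    have hupR : ((AdmSet ω n).ncard : ℝ) ≤ ∑ m ∈ Finset.range (n + 1), G (n - m) := by
      have := Nat.cast_le (α := ℝ) |>.2 hup
      rw [Nat.cast_sum] at this
      exact this
    have hrefl : ∑ m ∈ Finset.range (n + 1), G (n - m) = ∑ k ∈ Finset.range (n + 1), G k := by
      have := Finset.sum_range_reflect (fun k => G k) (n + 1)
      simpa using this
    rw [hrefl] at hupR
    linarith
  obtain ⟨c, hc, hcG⟩ := exists_const hβ G hG1 hGm hGle hsum
  refine ⟨c, hc, ?_⟩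
  intro n _hn
  have hF : ((followWords (betaShift ω) n).ncard : ℝ) = G n := by
    rw [follow_ncard hω0 hsd n]
  have hL : ((langWords (betaShift ω) n).ncard : ℝ) = ((AdmSet ω n).ncard : ℝ) := by
    rw [lang_ncard hω0 n]
  have hFpos : (0:ℝ) < G n := lt_of_lt_of_le one_pos (hG1 n)
  have hLle : ((AdmSet ω n).ncard : ℝ) ≤ β ^ (n + 1) / (β - 1) := by
    have hup := adm_ncard_le (ω := ω) hsd n
    have hupR : ((AdmSet ω n).ncard : ℝ) ≤ ∑ m ∈ Finset.range (n + 1), G (n - m) := by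
      have := Nat.cast_le (α := ℝ) |>.2 hup
      rw [Nat.cast_sum] at this
      exact this
    have hrefl : ∑ m ∈ Finset.range (n + 1), G (n - m) = ∑ k ∈ Finset.range (n + 1), G k := by
      have := Finset.sum_range_reflect (fun k => G k) (n + 1)
      simpa using this
    have hgeo : ∑ k ∈ Finset.range (n + 1), G k ≤ (β ^ (n + 1) - 1) / (β - 1) := by
      calc ∑ k ∈ Finset.range (n + 1), G k ≤ ∑ k ∈ Finset.range (n + 1), β ^ k :=
            Finset.sum_le_sum fun k _ => hGle k
        _ = (β ^ (n + 1) - 1) / (β - 1) := geom_sum_eq (ne_of_gt hβ) (n + 1)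
    rw [hrefl] at hupR
    have h4 : (β ^ (n + 1) - 1) / (β - 1) ≤ β ^ (n + 1) / (β - 1) := by
      gcongr
      linarith
    linarith
  have hFge : (FullSet ω n).ncard ≤ (AdmSet ω n).ncard := by
    apply Set.ncard_le_ncard _ (finite_admSet n)
    rintro b ⟨hbf, hbz⟩
    exact ⟨fullW_admW hbf, hbz⟩
  refine ⟨?_, ?_, ?_, ?_⟩
  · rw [hF]; exact hcG n
  · rw [hF]; exact hGle n
  · rw [hF, hL]
    rw [le_div_iff₀ hFpos, one_mul]
    show ((FullSet ω n).ncard : ℝ) ≤ ((AdmSet ω n).ncard : ℝ)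
    exact_mod_cast hFge
  · rw [hF, hL]
    rw [div_le_iff₀ hFpos]
    have hkey : c⁻¹ * (β / (β - 1)) * (c * β ^ n) = β ^ (n + 1) / (β - 1) := by
      field_simp
      ring
    calc ((AdmSet ω n).ncard : ℝ) ≤ β ^ (n + 1) / (β - 1) := hLle
      _ = c⁻¹ * (β / (β - 1)) * (c * β ^ n) := hkey.symm
      _ ≤ c⁻¹ * (β / (β - 1)) * G n := by
          apply mul_le_mul_of_nonneg_left (hcG n) (by positivity)

end PaperStmt
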